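/- Let H be a complex Hilbert space and A a von Neumann algebra on H. Then there exists a unique continuous linear map P : H →L[ℂ] H which is an orthogonal projection (P ∘ P = P and P is self-adjoint), belongs to the commutant A′ of A, and satisfies: (i) the compression P A P is commutative, i.e. for all a, b ∈ A, (P∘a∘P) ∘ (P∘b∘P) = (P∘b∘P) ∘ (P∘a∘P); and (ii) P is maximal with this property: for every orthogonal projection Q ∈ A′ such that for all a, b ∈ A, (Q∘a∘Q) ∘ (Q∘b∘Q) = (Q∘b∘Q) ∘ (Q∘a∘Q), one has Q ≤ P, i.e. P ∘ Q = Q. (P may be the zero map.) -/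

import Mathlib

/-- for any von Neumann algebra `A` on a complex Hilbert space `H`, there is a
unique orthogonal projection `P` in the commutant `A′` such that the compression `P A P` is
commutative and `P` dominates every orthogonal projection `Q ∈ A′` with `Q A Q` commutative. -/
theorem exists_unique_maximal_commutative_compression_projection
    (H : Type*) [NormedAddCommGroup H] [InnerProductSpace ℂ H] [CompleteSpace H]
    (A : VonNeumannAlgebra H) :
    ∃! P : H →L[ℂ] H,
      P * P = P ∧ IsSelfAdjoint P ∧ P ∈ A.commutant ∧
      (∀ a ∈ A, ∀ b ∈ A,
        (P * a * P) * (P * b * P) = (P * b * P) * (P * a * P)) ∧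
      (∀ Q : H →L[ℂ] H, Q * Q = Q → IsSelfAdjoint Q → Q ∈ A.commutant →
        (∀ a ∈ A, ∀ b ∈ A,
          (Q * a * Q) * (Q * b * Q) = (Q * b * Q) * (Q * a * Q)) →
        P * Q = Q) := by
  classical
  haveI : Nonempty A := ⟨⟨1, one_mem A⟩⟩
  -- the subspace on which all pairs from `A` commute
  set K : Submodule ℂ H := ⨅ (a : A) (b : A),
    LinearMap.ker (((a : H →L[ℂ] H) * (b : H →L[ℂ] H) - (b : H →L[ℂ] H) * (a : H →L[ℂ] H) : H →L[ℂ] H) : H →ₗ[ℂ] H) with hKdef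
  have hKmem : ∀ x : H, x ∈ K ↔ ∀ a ∈ A, ∀ b ∈ A, a (b x) = b (a x) := by
    intro x
    simp only [hKdef, Submodule.mem_iInf, LinearMap.mem_ker, ContinuousLinearMap.coe_coe,
      ContinuousLinearMap.sub_apply, ContinuousLinearMap.mul_apply, sub_eq_zero]
    exact ⟨fun h a ha b hb => h ⟨a, ha⟩ ⟨b, hb⟩, fun h a b => h a a.2 b b.2⟩
  have hKclosed : IsClosed (K : Set H) := by
    have : (K : Set H) = ⋂ (a : A) (b : A),
        (LinearMap.ker (((a : H →L[ℂ] H) * (b : H →L[ℂ] H) - (b : H →L[ℂ] H) * (a : H →L[ℂ] H) : H →L[ℂ] H) : H →ₗ[ℂ] H) : Set H) := by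
      ext x
      simp [hKdef, Submodule.mem_iInf, Set.mem_iInter]
    rw [this]
    exact isClosed_iInter fun a => isClosed_iInter fun b =>
      ContinuousLinearMap.isClosed_ker _
  haveI : CompleteSpace K := hKclosed.completeSpace_coe
  set P : H →L[ℂ] H := K.subtypeL ∘L K.orthogonalProjectionOnto with hPdef
  have hPapply : ∀ x : H, P x = (K.orthogonalProjectionOnto x : H) := fun x => rfl
  have hPmemK : ∀ x : H, P x ∈ K := fun x => (K.orthogonalProjectionOnto x).2
  have hPid : ∀ x ∈ K, P x = x := by
    intro x hx
    rw [hPapply]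
    exact Submodule.starProjection_eq_self_iff.mpr hx
  -- K is invariant under A
  have hKinv : ∀ a ∈ A, ∀ x ∈ K, a x ∈ K := by
    intro a ha x hx
    rw [hKmem] at hx ⊢
    intro b hb c hc
    have h1 : c (a x) = a (c x) := hx c hc a ha
    have h2 : b (a (c x)) = c (b (a x)) := by
      simpa [ContinuousLinearMap.mul_apply] using hx (b * a) (mul_mem hb ha) c hc
    rw [h1, h2]
  -- P belongs to the commutant
  have hPcomm : P ∈ A.commutant := by
    rw [VonNeumannAlgebra.mem_commutant_iff]
    intro g hg
    ext x
    simp only [ContinuousLinearMap.mul_apply]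
    have hw : x - P x ∈ Kᗮ := Submodule.sub_starProjection_mem_orthogonal x
    have h2 : g (x - P x) ∈ Kᗮ := by
      rw [Submodule.mem_orthogonal]
      intro u hu
      have h3 : inner ℂ ((ContinuousLinearMap.adjoint g) u) (x - P x) = (0 : ℂ) :=
        (Submodule.mem_orthogonal _ _).1 hw _ (by
          have hgs : ContinuousLinearMap.adjoint g ∈ A := by
            rw [← ContinuousLinearMap.star_eq_adjoint]; exact star_mem hg
          exact hKinv _ hgs u hu)
      rwa [ContinuousLinearMap.adjoint_inner_left] at h3
    have hgx : g x = g (P x) + g (x - P x) := by rw [← map_add]; congr 1; abel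
    have hz : P (g (x - P x)) = 0 := by
      rw [hPapply, Submodule.orthogonalProjectionOnto_apply_of_mem_orthogonal h2]
      rfl
    rw [hgx, map_add, hz, add_zero, hPid _ (hKinv g hg _ (hPmemK x))]
  have hPP : P * P = P := by
    ext x
    exact hPid _ (hPmemK x)
  have hPsa : IsSelfAdjoint P := isSelfAdjoint_starProjection K
  -- compression algebra lemmas
  have hcompress : ∀ R : H →L[ℂ] H, R * R = R → R ∈ A.commutant →
      ∀ a : H →L[ℂ] H, a ∈ A → R * a * R = a * R := by
    intro R hRR hRc a ha
    have h := (VonNeumannAlgebra.mem_commutant_iff.mp hRc) a ha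
    rw [← h, mul_assoc, hRR]
  have hcompress2 : ∀ R : H →L[ℂ] H, R * R = R → R ∈ A.commutant →
      ∀ a ∈ A, ∀ b ∈ A, (a * R) * (b * R) = a * b * R := by
    intro R hRR hRc a ha b hb
    calc (a * R) * (b * R) = a * (R * (b * R)) := by rw [mul_assoc]
      _ = a * (R * b * R) := by rw [mul_assoc R b R]
      _ = a * (b * R) := by rw [hcompress R hRR hRc b hb]
      _ = a * b * R := by rw [mul_assoc]
  -- any admissible R has range inside K
  have hrange : ∀ R : H →L[ℂ] H, R * R = R → R ∈ A.commutant →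
      (∀ a ∈ A, ∀ b ∈ A, (R * a * R) * (R * b * R) = (R * b * R) * (R * a * R)) →
      ∀ x : H, R x ∈ K := by
    intro R hRR hRc hRcomm x
    rw [hKmem]
    intro a ha b hb
    have h := hRcomm a ha b hb
    rw [hcompress R hRR hRc a ha, hcompress R hRR hRc b hb,
      hcompress2 R hRR hRc a ha b hb, hcompress2 R hRR hRc b hb a ha] at h
    have h2 := congrArg (fun f : H →L[ℂ] H => f x) h
    simpa [ContinuousLinearMap.mul_apply] using h2
  -- commutativity of the compression P A P
  have hPcomm2 : ∀ a ∈ A, ∀ b ∈ A,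
      (P * a * P) * (P * b * P) = (P * b * P) * (P * a * P) := by
    intro a ha b hb
    rw [hcompress P hPP hPcomm a ha, hcompress P hPP hPcomm b hb,
      hcompress2 P hPP hPcomm a ha b hb, hcompress2 P hPP hPcomm b hb a ha]
    ext x
    have := (hKmem (P x)).1 (hPmemK x) a ha b hb
    simpa [ContinuousLinearMap.mul_apply] using this
  -- maximality
  have hPmax : ∀ Q : H →L[ℂ] H, Q * Q = Q → IsSelfAdjoint Q → Q ∈ A.commutant →
      (∀ a ∈ A, ∀ b ∈ A, (Q * a * Q) * (Q * b * Q) = (Q * b * Q) * (Q * a * Q)) →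
      P * Q = Q := by
    intro Q hQQ hQsa hQc hQcomm
    ext x
    exact hPid _ (hrange Q hQQ hQc hQcomm x)
  refine ⟨P, ⟨hPP, hPsa, hPcomm, hPcomm2, hPmax⟩, ?_⟩
  rintro y ⟨hyy, hysa, hyc, hycomm, hymax⟩
  have h1 : P * y = y := hPmax y hyy hysa hyc hycomm
  have h2 : y * P = P := hymax P hPP hPsa hPcomm hPcomm2
  have h3 : y * P = y := by
    have := congrArg star h1
    rwa [star_mul, hysa.star_eq, hPsa.star_eq] at this
  rw [← h3, h2]
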